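/- (Difference equation for q-Genocchi polynomials.) For every integer n ≥ 1 and all x ∈ ℂ: G_{n,q}(x,1) + G_{n,q}(x) = 2 ((−1;q)_{n−1}/2^{n−1}) [n]_q x^{n−1}. -/

import Mathlib

open Finset PowerSeries

/-- The `q`-number `[n]_q = (1 - q^n)/(1 - q)`. -/
noncomputable def qNum (q : ℂ) (n : ℕ) : ℂ := (1 - q ^ n) / (1 - q)

/-- The `q`-factorial `[n]_q!`. -/
noncomputable def qFact (q : ℂ) : ℕ → ℂ
  | 0 => 1
  | n + 1 => qNum q (n + 1) * qFact q n

/-- The `q`-shifted factorial `(a; q)_n = ∏_{j=0}^{n-1} (1 - q^j a)`. -/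
noncomputable def qShift (a q : ℂ) (n : ℕ) : ℂ := ∏ j ∈ Finset.range n, (1 - q ^ j * a)

/-- The Gaussian binomial coefficient `[n choose k]_q = (q;q)_n / ((q;q)_{n-k} (q;q)_k)`. -/
noncomputable def qBinom (q : ℂ) (n k : ℕ) : ℂ :=
  qShift q q n / (qShift q q (n - k) * qShift q q k)

/-- The formal power series (in `t`) `𝓔_q(tx) = Σ_{n≥0} (-1;q)_n (x)^n t^n / (2^n [n]_q!)`. -/
noncomputable def qExp (q x : ℂ) : PowerSeries ℂ :=
  PowerSeries.mk fun n => qShift (-1) q n * x ^ n / (2 ^ n * qFact q n)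

/-- The generating series `Σ_{n≥0} a_n t^n / [n]_q!` of a sequence `a`. -/
noncomputable def qGen (q : ℂ) (a : ℕ → ℂ) : PowerSeries ℂ :=
  PowerSeries.mk fun n => a n / qFact q n

/-- The `q`-addition `(x ⊕_q y)^n`. -/
noncomputable def qAdd (q x y : ℂ) (n : ℕ) : ℂ :=
  ∑ k ∈ Finset.range (n + 1),
    qBinom q n k * (qShift (-1) q k * qShift (-1) q (n - k) / 2 ^ n) * x ^ k * y ^ (n - k)

lemma qNum_ne_zero (q : ℂ) (hq1 : ‖q‖ < 1) (k : ℕ) (hk : 1 ≤ k) :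
    qNum q k ≠ 0 := by
  have h1 : q ^ k ≠ 1 := by
    intro h
    have : ‖q ^ k‖ = 1 := by rw [h]; simp
    rw [norm_pow] at this
    have h' : ‖q‖ ^ k < 1 := pow_lt_one₀ (norm_nonneg q) hq1 (by omega)
    linarith
  have h2 : (1 : ℂ) - q ≠ 0 := by
    intro h
    have : q = 1 := by linear_combination -h
    rw [this] at hq1; simp at hq1
  exact div_ne_zero (fun h => h1 (by linear_combination -h)) h2

lemma qFact_ne_zero (q : ℂ) (hq1 : ‖q‖ < 1) (n : ℕ) : qFact q n ≠ 0 := by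
  induction n with
  | zero => simp [qFact]
  | succ m ih => exact mul_ne_zero (qNum_ne_zero q hq1 (m + 1) (by omega)) ih

lemma qExp_zero (q : ℂ) : qExp q 0 = 1 := by
  ext n
  cases n with
  | zero => simp [qExp, qShift, qFact]
  | succ m => simp [qExp]

/-- Difference equation for the `q`-Genocchi polynomials:
`G_{n,q}(x,1) + G_{n,q}(x) = 2((-1;q)_{n-1}/2^{n-1}) [n]_q x^{n-1}` for `n ≥ 1`. -/
theorem qGenocchi_difference (q : ℂ) (hq0 : 0 < ‖q‖) (hq1 : ‖q‖ < 1)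
    (G : ℂ → ℂ → ℕ → ℂ)
    (hG : ∀ x y : ℂ, qGen q (G x y) * (qExp q 1 + 1) = 2 * PowerSeries.X * qExp q x * qExp q y)
    (n : ℕ) (hn : 1 ≤ n) (x : ℂ) :
    G x 1 n + G x 0 n = 2 * (qShift (-1) q (n - 1) / 2 ^ (n - 1)) * qNum q n * x ^ (n - 1) := by
  obtain ⟨m, rfl⟩ : ∃ m, n = m + 1 := ⟨n - 1, by omega⟩
  have h1 := hG x 1
  have h0 := hG x 0
  rw [qExp_zero, mul_one] at h0
  have hne : qExp q 1 + 1 ≠ 0 := by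
    intro h
    have := congrArg (PowerSeries.coeff 0) h
    simp [qExp, qShift, qFact] at this
  have key : qGen q (G x 1) + qGen q (G x 0) = 2 * PowerSeries.X * qExp q x :=
    mul_right_cancel₀ hne (by linear_combination h1 + h0)
  have hc := congrArg (PowerSeries.coeff (m + 1)) key
  rw [show (2 : PowerSeries ℂ) * PowerSeries.X * qExp q x
      = PowerSeries.X * (PowerSeries.C (2 : ℂ) * qExp q x) by rw [map_ofNat]; ring] at hc
  rw [map_add, PowerSeries.coeff_succ_X_mul, PowerSeries.coeff_C_mul] at hc
  simp only [qGen, qExp, PowerSeries.coeff_mk] at hc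
  have hF := qFact_ne_zero q hq1
  have hFm := hF m
  have hFm1 := hF (m + 1)
  have h2m : (2 : ℂ) ^ m ≠ 0 := pow_ne_zero m two_ne_zero
  have hfs : qFact q (m + 1) = qNum q (m + 1) * qFact q m := rfl
  try simp only [Nat.add_sub_cancel] at hc ⊢
  field_simp at hc
  rw [hfs] at hc
  have hc3 := mul_right_cancel₀ hFm (show ((G x 1 (m + 1) + G x 0 (m + 1)) * 2 ^ m) * qFact q m
      = (2 * qShift (-1) q m * x ^ m * qNum q (m + 1)) * qFact q m by linear_combination hc)
  field_simp
  linear_combination hc3
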